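/- If φ : X → Y is an open bi-closing code between shift spaces, then φ is a local homeomorphism. -/

import Mathlib

open Set Function Filter

variable {A : Type*} {B : Type*} {C : Type*}

/-- The shift map on the full shift. -/
def shiftMap (x : ℤ → A) : ℤ → A := fun i => x (i + 1)

/-- A shift space (subshift): a closed shift-invariant subset of the full shift. -/
def IsSubshift [TopologicalSpace A] (X : Set (ℤ → A)) : Prop :=
  IsClosed X ∧ shiftMap '' X = X

/-- The word `w` occurs in `x` at position `k`. -/
def OccursAt (x : ℤ → A) (k : ℤ) (w : List A) : Prop :=
  ∀ i : Fin w.length, x (k + ((i : ℕ) : ℤ)) = w.get i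

/-- The word `w` belongs to the language of `X`. -/
def WordIn (X : Set (ℤ → A)) (w : List A) : Prop :=
  ∃ x ∈ X, ∃ k : ℤ, OccursAt x k w

/-- Irreducibility of a shift space. -/
def IrreducibleSubshift (X : Set (ℤ → A)) : Prop :=
  ∀ u v : List A, WordIn X u → WordIn X v → ∃ w : List A, WordIn X (u ++ w ++ v)

/-- Nonwandering shift space. -/
def NonwanderingSubshift (X : Set (ℤ → A)) : Prop :=
  ∀ u : List A, WordIn X u → ∃ w : List A, WordIn X (u ++ w ++ u)

/-- A shift of finite type: defined by a finite set of forbidden words. -/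
def IsSFT (X : Set (ℤ → A)) : Prop :=
  ∃ F : Finset (List A), X = {x : ℤ → A | ∀ w ∈ F, ∀ k : ℤ, ¬ OccursAt x k w}

/-- A (sliding block) code: a continuous shift-commuting map between shift spaces. -/
def IsCode [TopologicalSpace A] [TopologicalSpace B]
    {X : Set (ℤ → A)} {Y : Set (ℤ → B)} (φ : X → Y) : Prop :=
  Continuous φ ∧
    ∀ (x : X) (hx : shiftMap (x : ℤ → A) ∈ X),
      ((φ ⟨shiftMap (x : ℤ → A), hx⟩ : Y) : ℤ → B) = shiftMap ((φ x : Y) : ℤ → B)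

/-- A sofic shift: a factor of a shift of finite type. -/
def IsSofic [TopologicalSpace A] (Y : Set (ℤ → A)) : Prop :=
  ∃ (n : ℕ) (Z : Set (ℤ → Fin n)), IsSubshift Z ∧ IsSFT Z ∧
    ∃ ψ : Z → Y, IsCode ψ ∧ Function.Surjective ψ

/-- Two points are left asymptotic if they agree on all sufficiently negative coordinates. -/
def LeftAsymptotic (x y : ℤ → A) : Prop := ∃ N : ℤ, ∀ i ≤ N, x i = y i

/-- Two points are right asymptotic if they agree on all sufficiently positive coordinates. -/
def RightAsymptotic (x y : ℤ → A) : Prop := ∃ N : ℤ, ∀ i, N ≤ i → x i = y i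

/-- A code is right closing if it never collapses two distinct left asymptotic points. -/
def RightClosing {X : Set (ℤ → A)} {Y : Set (ℤ → B)} (φ : X → Y) : Prop :=
  ∀ x x' : X, LeftAsymptotic (x : ℤ → A) (x' : ℤ → A) → φ x = φ x' → x = x'

/-- A code is left closing if it never collapses two distinct right asymptotic points. -/
def LeftClosing {X : Set (ℤ → A)} {Y : Set (ℤ → B)} (φ : X → Y) : Prop :=
  ∀ x x' : X, RightAsymptotic (x : ℤ → A) (x' : ℤ → A) → φ x = φ x' → x = x'

/-- Bi-closing: both right and left closing. -/
def BiClosing {X : Set (ℤ → A)} {Y : Set (ℤ → B)} (φ : X → Y) : Prop :=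
  RightClosing φ ∧ LeftClosing φ

/-- Finite-to-one map. -/
def FiniteToOne {α β : Type*} (φ : α → β) : Prop := ∀ y : β, (φ ⁻¹' {y}).Finite

/-- Every fiber has exactly `d` elements. -/
def ExactlyDToOne {α β : Type*} (φ : α → β) (d : ℕ) : Prop :=
  ∀ y : β, (φ ⁻¹' {y}).Finite ∧ Nat.card (φ ⁻¹' {y}) = d

/-- Constant-to-one map. -/
def ConstantToOne {α β : Type*} (φ : α → β) : Prop := ∃ d : ℕ, ExactlyDToOne φ d

/-- A doubly transitive point: every word of `Y` occurs infinitely often to the left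
and to the right. -/
def DoublyTransitive (Y : Set (ℤ → A)) (y : ℤ → A) : Prop :=
  ∀ w : List A, WordIn Y w → ∀ N : ℤ,
    (∃ k ≥ N, OccursAt y k w) ∧ (∃ k ≤ N, OccursAt y k w)

/-- The maximal nonwandering subshift of `X`. -/
def OmegaSet [TopologicalSpace A] (X : Set (ℤ → A)) : Set (ℤ → A) :=
  ⋃₀ {Z : Set (ℤ → A) | Z ⊆ X ∧ IsSubshift Z ∧ NonwanderingSubshift Z}

/-- Topological entropy of a subshift, via the growth rate of the number of words. -/
noncomputable def subshiftEntropy (X : Set (ℤ → A)) : ℝ :=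
  Filter.limsup
    (fun n : ℕ => Real.log (Nat.card {w : List A | w.length = n ∧ WordIn X w}) / n)
    Filter.atTop

/-- An irreducible component of `X`: a maximal nonempty irreducible subshift of `X`. -/
def IsIrreducibleComponent [TopologicalSpace A] (X X₀ : Set (ℤ → A)) : Prop :=
  X₀ ⊆ X ∧ IsSubshift X₀ ∧ X₀.Nonempty ∧ IrreducibleSubshift X₀ ∧
    ∀ Z : Set (ℤ → A), Z ⊆ X → IsSubshift Z → IrreducibleSubshift Z → X₀ ⊆ Z → Z = X₀

-- The metric on a shift space: `d(x,y) = 2^{-k}` where `k` is maximal with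
-- `x` and `y` agreeing on `[-k,k]`, and `0` if `x = y`.
open Classical in
noncomputable def shiftDist (x y : ℤ → A) : ℝ :=
  if x = y then 0
  else (2 : ℝ) ^ (-((sSup {n : ℕ | ∀ i : ℤ, |i| ≤ (n : ℤ) → x i = y i} : ℕ) : ℤ))


/-- Shift by an arbitrary integer amount. -/
def shiftZ (d : ℤ) (x : ℤ → A) : ℤ → A := fun i => x (i + d)

lemma shiftZ_shiftZ (d e : ℤ) (x : ℤ → A) : shiftZ d (shiftZ e x) = shiftZ (e + d) x := by
  funext i
  simp only [shiftZ]
  congr 1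
  ring

lemma shiftZ_zero (x : ℤ → A) : shiftZ 0 x = x := by
  funext i; simp [shiftZ]

lemma shiftMap_eq_shiftZ (x : ℤ → A) : shiftMap x = shiftZ 1 x := rfl

lemma shiftZ_mem [TopologicalSpace A] {X : Set (ℤ → A)} (hX2 : shiftMap '' X = X)
    (d : ℤ) {x : ℤ → A} (hx : x ∈ X) : shiftZ d x ∈ X := by
  have h1 : ∀ y ∈ X, shiftZ 1 y ∈ X := fun y hy => by
    have : shiftMap y ∈ shiftMap '' X := ⟨y, hy, rfl⟩
    rw [hX2] at this
    exact this
  have hm1 : ∀ y ∈ X, shiftZ (-1) y ∈ X := by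
    intro y hy
    rw [← hX2] at hy
    obtain ⟨z, hz, rfl⟩ := hy
    have : shiftZ (-1) (shiftMap z) = z := by
      rw [shiftMap_eq_shiftZ, shiftZ_shiftZ]
      norm_num [shiftZ_zero]
    rw [this]
    exact hz
  induction d using Int.induction_on with
  | zero => rwa [shiftZ_zero]
  | succ n ih =>
      have := h1 _ ih
      rwa [shiftZ_shiftZ] at this
  | pred n ih =>
      have := hm1 _ ih
      rw [shiftZ_shiftZ, show (-(n : ℤ) + -1) = -(n : ℤ) - 1 from by ring] at this
      exact this

lemma phi_shiftZ [TopologicalSpace A] [TopologicalSpace B]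
    {X : Set (ℤ → A)} {Y : Set (ℤ → B)} (hX2 : shiftMap '' X = X)
    {φ : X → Y} (hφ : IsCode φ) (d : ℤ) (x : X) :
    ∀ (h : shiftZ d (x : ℤ → A) ∈ X),
      ((φ ⟨shiftZ d (x : ℤ → A), h⟩ : Y) : ℤ → B) = shiftZ d ((φ x : Y) : ℤ → B) := by
  induction d using Int.induction_on with
  | zero =>
      intro h
      have : (⟨shiftZ 0 (x : ℤ → A), h⟩ : X) = x := Subtype.ext (shiftZ_zero _)
      rw [this, shiftZ_zero]
  | succ n ih =>
      intro h
      have hn : shiftZ (n : ℤ) (x : ℤ → A) ∈ X := shiftZ_mem hX2 _ x.2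
      have e : shiftZ ((n : ℤ) + 1) (x : ℤ → A) = shiftMap (shiftZ (n : ℤ) (x : ℤ → A)) := by
        rw [shiftMap_eq_shiftZ, shiftZ_shiftZ]
      have h' : shiftMap ((⟨shiftZ (n : ℤ) (x : ℤ → A), hn⟩ : X) : ℤ → A) ∈ X := by
        rw [← e] at *; exact h
      have key := hφ.2 ⟨shiftZ (n : ℤ) (x : ℤ → A), hn⟩ h'
      have e2 : (⟨shiftZ ((n : ℤ) + 1) (x : ℤ → A), h⟩ : X)
          = ⟨shiftMap ((⟨shiftZ (n : ℤ) (x : ℤ → A), hn⟩ : X) : ℤ → A), h'⟩ :=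
        Subtype.ext e
      rw [e2, key, ih hn, shiftMap_eq_shiftZ, shiftZ_shiftZ]
  | pred n ih =>
      intro h
      have hn : shiftZ (-(n : ℤ)) (x : ℤ → A) ∈ X := shiftZ_mem hX2 _ x.2
      set z : X := ⟨shiftZ (-(n : ℤ) - 1) (x : ℤ → A), h⟩ with hz
      have e : shiftMap ((z : ℤ → A)) = shiftZ (-(n : ℤ)) (x : ℤ → A) := by
        rw [shiftMap_eq_shiftZ, hz, shiftZ_shiftZ]
        congr 1
        ring
      have h' : shiftMap ((z : ℤ → A)) ∈ X := by rw [e]; exact hn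
      have key := hφ.2 z h'
      have e2 : (⟨shiftMap ((z : ℤ → A)), h'⟩ : X) = ⟨shiftZ (-(n : ℤ)) (x : ℤ → A), hn⟩ :=
        Subtype.ext e
      rw [e2, ih hn] at key
      -- key : shiftZ (-n) (φ x) = shiftMap (φ z)
      have := congrArg (shiftZ (-1)) key
      rw [shiftMap_eq_shiftZ, shiftZ_shiftZ, shiftZ_shiftZ] at this
      rw [show ((1 : ℤ) + -1) = 0 from by norm_num, shiftZ_zero,
        show (-(n : ℤ) + -1) = -(n : ℤ) - 1 from by ring] at this
      exact this.symm

/-- From a filter of pairs with closed constraints, extract a cluster point pair. -/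
lemma cluster_aux {A : Type*} {B : Type*} [Finite A] [TopologicalSpace A] [DiscreteTopology A]
    [Finite B] [TopologicalSpace B] [DiscreteTopology B]
    {X : Set (ℤ → A)} {Y : Set (ℤ → B)} (hXc : IsClosed X)
    (φ : X → Y) (hc : Continuous φ)
    (F : Filter ℕ) [F.NeBot] (p q : ℕ → X) (S : Set ℤ)
    (h1 : ∀ᶠ n in F, φ (p n) = φ (q n))
    (h2 : ∀ᶠ n in F, ((p n : ℤ → A)) 0 ≠ ((q n : ℤ → A)) 0)
    (h3 : ∀ i ∈ S, ∀ᶠ n in F, ((p n : ℤ → A)) i = ((q n : ℤ → A)) i) :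
    ∃ y y' : X, φ y = φ y' ∧ ((y : ℤ → A)) 0 ≠ ((y' : ℤ → A)) 0 ∧
      ∀ i ∈ S, ((y : ℤ → A)) i = ((y' : ℤ → A)) i := by
  haveI : CompactSpace X := isCompact_iff_compactSpace.mp hXc.isCompact
  obtain ⟨z, hz⟩ := exists_clusterPt_of_compactSpace (Filter.map (fun n => (p n, q n)) F)
  have key : ∀ C : Set (X × X), IsClosed C → (∀ᶠ n in F, (p n, q n) ∈ C) → z ∈ C := by
    intro C hC hmem
    have hC' : C ∈ Filter.map (fun n => (p n, q n)) F := Filter.mem_map.mpr hmem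
    have : ClusterPt z (𝓟 C) := hz.mono (le_principal_iff.mpr hC')
    have := mem_closure_iff_clusterPt.mpr this
    rwa [hC.closure_eq] at this
  have hev : ∀ i : ℤ, Continuous (fun w : X × X => ((w.1 : ℤ → A) i, (w.2 : ℤ → A) i)) := by
    intro i
    exact ((continuous_apply i).comp (continuous_subtype_val.comp continuous_fst)).prodMk
      ((continuous_apply i).comp (continuous_subtype_val.comp continuous_snd))
  refine ⟨z.1, z.2, ?_, ?_, ?_⟩
  · exact key {w | φ w.1 = φ w.2}
      (isClosed_eq (hc.comp continuous_fst) (hc.comp continuous_snd)) h1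
  · have : IsClosed {w : X × X | (w.1 : ℤ → A) 0 ≠ (w.2 : ℤ → A) 0} := by
      have : {w : X × X | (w.1 : ℤ → A) 0 ≠ (w.2 : ℤ → A) 0}
          = (fun w : X × X => ((w.1 : ℤ → A) 0, (w.2 : ℤ → A) 0)) ⁻¹'
            {ab : A × A | ab.1 = ab.2}ᶜ := rfl
      rw [this]
      exact ((isOpen_discrete _).isClosed_compl).preimage (hev 0)
    exact key _ this h2
  · intro i hi
    exact key {w : X × X | (w.1 : ℤ → A) i = (w.2 : ℤ → A) i}
      (isClosed_eq ((continuous_apply i).comp (continuous_subtype_val.comp continuous_fst))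
        ((continuous_apply i).comp (continuous_subtype_val.comp continuous_snd))) (h3 i hi)

/-- The key separation lemma: a bi-closing code has uniformly separated fibers. -/
lemma biclosing_separation {A : Type*} {B : Type*} [Finite A] [TopologicalSpace A]
    [DiscreteTopology A] [Finite B] [TopologicalSpace B] [DiscreteTopology B]
    {X : Set (ℤ → A)} {Y : Set (ℤ → B)} (hX : IsSubshift X)
    (φ : X → Y) (hφ : IsCode φ) (hbc : BiClosing φ) :
    ∃ N : ℕ, ∀ x x' : X, φ x = φ x' →
      (∀ i : ℤ, |i| ≤ (N : ℤ) → (x : ℤ → A) i = (x' : ℤ → A) i) → x = x' := by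
  classical
  by_contra hcon
  push_neg at hcon
  choose u v h1 h2 h3 using hcon
  have hexists : ∀ n : ℕ, ∃ k : ℕ,
      (u n : ℤ → A) (k : ℤ) ≠ (v n : ℤ → A) (k : ℤ) ∨
      (u n : ℤ → A) (-(k : ℤ)) ≠ (v n : ℤ → A) (-(k : ℤ)) := by
    intro n
    have hne : (u n : ℤ → A) ≠ (v n : ℤ → A) := fun h => h3 n (Subtype.ext h)
    obtain ⟨i, hi⟩ := Function.ne_iff.mp hne
    refine ⟨i.natAbs, ?_⟩
    rcases Int.natAbs_eq i with h | h
    · left; rwa [← h]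
    · right; rwa [← h]
  set m : ℕ → ℕ := fun n => Nat.find (hexists n) with hm
  have hspec : ∀ n, (u n : ℤ → A) ((m n : ℕ) : ℤ) ≠ (v n : ℤ → A) ((m n : ℕ) : ℤ) ∨
      (u n : ℤ → A) (-((m n : ℕ) : ℤ)) ≠ (v n : ℤ → A) (-((m n : ℕ) : ℤ)) :=
    fun n => Nat.find_spec (hexists n)
  have hmin : ∀ n, ∀ i : ℤ, i.natAbs < m n → (u n : ℤ → A) i = (v n : ℤ → A) i := by
    intro n i hi
    have := Nat.find_min (hexists n) hi
    push_neg at this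
    rcases Int.natAbs_eq i with h | h
    · rw [h]; exact this.1
    · rw [h]; exact this.2
  have hmgt : ∀ n : ℕ, (n : ℤ) < ((m n : ℕ) : ℤ) := by
    intro n
    by_contra hle
    push_neg at hle
    have habs1 : |((m n : ℕ) : ℤ)| ≤ (n : ℤ) := by
      rwa [abs_of_nonneg (Int.natCast_nonneg _)]
    have habs2 : |(-((m n : ℕ) : ℤ))| ≤ (n : ℤ) := by rwa [abs_neg]
    rcases hspec n with h | h
    · exact h (h2 n _ habs1)
    · exact h (h2 n _ habs2)
  have hmem : ∀ (d : ℤ) (x : X), shiftZ d (x : ℤ → A) ∈ X :=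
    fun d x => shiftZ_mem hX.2 d x.2
  have hφeq : ∀ (d : ℕ → ℤ) (n : ℕ),
      (φ ⟨shiftZ (d n) (u n : ℤ → A), hmem _ _⟩ : Y) = φ ⟨shiftZ (d n) (v n : ℤ → A), hmem _ _⟩ := by
    intro d n
    apply Subtype.ext
    rw [phi_shiftZ hX.2 hφ (d n) (u n) (hmem _ _), phi_shiftZ hX.2 hφ (d n) (v n) (hmem _ _),
      h1 n]
  -- one of the two sides has frequently many disagreements
  by_cases hcase : ∃ᶠ n in Filter.atTop,
      (u n : ℤ → A) ((m n : ℕ) : ℤ) ≠ (v n : ℤ → A) ((m n : ℕ) : ℤ)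
  · -- disagreement on the right, frequently; shift left by m n
    set F := Filter.atTop ⊓ 𝓟
      {n : ℕ | (u n : ℤ → A) ((m n : ℕ) : ℤ) ≠ (v n : ℤ → A) ((m n : ℕ) : ℤ)} with hF
    haveI : F.NeBot := Filter.frequently_iff_neBot.mp hcase
    set p : ℕ → X := fun n => ⟨shiftZ ((m n : ℕ) : ℤ) (u n : ℤ → A), hmem _ _⟩ with hp
    set q : ℕ → X := fun n => ⟨shiftZ ((m n : ℕ) : ℤ) (v n : ℤ → A), hmem _ _⟩ with hq
    obtain ⟨y, y', hyφ, hy0, hyS⟩ := cluster_aux hX.1 φ hφ.1 F p q {i : ℤ | i ≤ -1}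
      (Filter.Eventually.of_forall fun n => hφeq (fun n => ((m n : ℕ) : ℤ)) n)
      (by
        have : ∀ n ∈ {n : ℕ | (u n : ℤ → A) ((m n : ℕ) : ℤ) ≠ (v n : ℤ → A) ((m n : ℕ) : ℤ)},
            ((p n : ℤ → A)) 0 ≠ ((q n : ℤ → A)) 0 := by
          intro n hn
          simpa [hp, hq, shiftZ] using hn
        exact Filter.eventually_inf_principal.mpr (Filter.Eventually.of_forall this))
      (by
        intro i hi
        simp only [Set.mem_setOf_eq] at hi
        have : ∀ᶠ n in Filter.atTop, ((p n : ℤ → A)) i = ((q n : ℤ → A)) i := by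
          rw [Filter.eventually_atTop]
          refine ⟨(-i).toNat, fun n hn => ?_⟩
          have hni : (-i : ℤ) ≤ n := by omega
          have hmn := hmgt n
          have habs : (i + ((m n : ℕ) : ℤ)).natAbs < m n := by omega
          simpa [hp, hq, shiftZ] using hmin n _ habs
        exact this.filter_mono inf_le_left)
    have hyne : y ≠ y' := fun h => hy0 (by rw [h])
    exact hyne (hbc.1 y y' ⟨-1, fun i hi => hyS i hi⟩ hyφ)
  · -- disagreement on the left, frequently; shift right by m n
    have hcase' : ∃ᶠ n in Filter.atTop,
        (u n : ℤ → A) (-((m n : ℕ) : ℤ)) ≠ (v n : ℤ → A) (-((m n : ℕ) : ℤ)) := by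
      have hev := Filter.not_frequently.mp hcase
      refine hev.frequently.mono fun n hn => ?_
      rcases hspec n with h | h
      · exact absurd h hn
      · exact h
    set F := Filter.atTop ⊓ 𝓟
      {n : ℕ | (u n : ℤ → A) (-((m n : ℕ) : ℤ)) ≠ (v n : ℤ → A) (-((m n : ℕ) : ℤ))} with hF
    haveI : F.NeBot := Filter.frequently_iff_neBot.mp hcase'
    set p : ℕ → X := fun n => ⟨shiftZ (-((m n : ℕ) : ℤ)) (u n : ℤ → A), hmem _ _⟩ with hp
    set q : ℕ → X := fun n => ⟨shiftZ (-((m n : ℕ) : ℤ)) (v n : ℤ → A), hmem _ _⟩ with hq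
    obtain ⟨y, y', hyφ, hy0, hyS⟩ := cluster_aux hX.1 φ hφ.1 F p q {i : ℤ | 1 ≤ i}
      (Filter.Eventually.of_forall fun n => hφeq (fun n => -((m n : ℕ) : ℤ)) n)
      (by
        have : ∀ n ∈ {n : ℕ | (u n : ℤ → A) (-((m n : ℕ) : ℤ)) ≠ (v n : ℤ → A) (-((m n : ℕ) : ℤ))},
            ((p n : ℤ → A)) 0 ≠ ((q n : ℤ → A)) 0 := by
          intro n hn
          simpa [hp, hq, shiftZ] using hn
        exact Filter.eventually_inf_principal.mpr (Filter.Eventually.of_forall this))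
      (by
        intro i hi
        simp only [Set.mem_setOf_eq] at hi
        have : ∀ᶠ n in Filter.atTop, ((p n : ℤ → A)) i = ((q n : ℤ → A)) i := by
          rw [Filter.eventually_atTop]
          refine ⟨i.toNat, fun n hn => ?_⟩
          have hni : (i : ℤ) ≤ n := by omega
          have hmn := hmgt n
          have habs : (i + -((m n : ℕ) : ℤ)).natAbs < m n := by omega
          simpa [hp, hq, shiftZ] using hmin n _ habs
        exact this.filter_mono inf_le_left)
    have hyne : y ≠ y' := fun h => hy0 (by rw [h])
    exact hyne (hbc.2 y y' ⟨1, fun i hi => hyS i hi⟩ hyφ)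

theorem open_biclosing_is_local_homeo {A : Type*} {B : Type*} [Finite A] [TopologicalSpace A] [DiscreteTopology A]
    [Finite B] [TopologicalSpace B] [DiscreteTopology B]
    {X : Set (ℤ → A)} {Y : Set (ℤ → B)} (hX : IsSubshift X) (hY : IsSubshift Y)
    (φ : X → Y) (hφ : IsCode φ)
    (hopen : IsOpenMap φ) (hbc : BiClosing φ) :
    IsLocalHomeomorph φ := by
  obtain ⟨N, hN⟩ := biclosing_separation hX φ hφ hbc
  rw [isLocalHomeomorph_iff_isOpenEmbedding_restrict]
  intro x
  set U : Set X := {z : X | ∀ i : ℤ, |i| ≤ (N : ℤ) → (z : ℤ → A) i = (x : ℤ → A) i} with hU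
  have hUopen : IsOpen U := by
    have hU' : U = ⋂ i ∈ Finset.Icc (-(N : ℤ)) (N : ℤ),
        {z : X | (z : ℤ → A) i = (x : ℤ → A) i} := by
      ext z
      simp only [hU, Set.mem_setOf_eq, Set.mem_iInter, Finset.mem_Icc]
      constructor
      · intro h i hi
        exact h i (abs_le.mpr hi)
      · intro h i hi
        exact h i (abs_le.mp hi)
    rw [hU']
    refine isOpen_biInter_finset fun i _ => ?_
    have hc : Continuous (fun z : X => (z : ℤ → A) i) :=
      (continuous_apply i).comp continuous_subtype_val
    exact (isOpen_discrete {(x : ℤ → A) i}).preimage hc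
  have hxU : x ∈ U := fun i _ => rfl
  refine ⟨U, hUopen.mem_nhds hxU, ?_⟩
  rw [Topology.isOpenEmbedding_iff_continuous_injective_isOpenMap]
  refine ⟨hφ.1.comp continuous_subtype_val, ?_, hopen.restrict hUopen⟩
  rintro ⟨z, hz⟩ ⟨z', hz'⟩ h
  simp only [Set.restrict_apply] at h
  exact Subtype.ext (hN z z' h fun i hi => (hz i hi).trans (hz' i hi).symm)
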